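/- Let Z be a nonzero real or complex Banach space which is lush, and let P : Z → Z be a linear L-projection (i.e. ‖z‖ = ‖Pz‖ + ‖z − Pz‖ for all z ∈ Z) with range X. Then the subspace X, equipped with the norm inherited from Z, is lush. -/

import Mathlib

open scoped BigOperators

/-- The open slice `S(B_X, f, α) = {x ∈ B_X : Re f(x) > 1 - α}` of the closed unit ball. -/
def Slice (𝕜 : Type*) {X : Type*} [RCLike 𝕜] [NormedAddCommGroup X] [NormedSpace 𝕜 X]
    (f : X →L[𝕜] 𝕜) (α : ℝ) : Set X :=
  {x | ‖x‖ ≤ 1 ∧ 1 - α < RCLike.re (f x)}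

/-- The convex hull of `𝕋 · S(B_X, f, α)`, i.e. all convex combinations of rotated points of
the slice `S(B_X, f, α)`. -/
def ConvRotSlice (𝕜 : Type*) {X : Type*} [RCLike 𝕜] [NormedAddCommGroup X] [NormedSpace 𝕜 X]
    (f : X →L[𝕜] 𝕜) (α : ℝ) : Set X :=
  {x | ∃ (n : ℕ) (t : Fin n → ℝ) (ω : Fin n → 𝕜) (s : Fin n → X),
    (∀ k, 0 ≤ t k) ∧ (∑ k, t k) = 1 ∧ (∀ k, ‖ω k‖ = 1) ∧ (∀ k, s k ∈ Slice 𝕜 f α) ∧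
    x = ∑ k, ((t k : 𝕜) * ω k) • s k}

/-- A Banach space `X` over `𝕜 = ℝ` or `ℂ` is *lush* if for all `u, v` in the unit sphere and
every `ε > 0` there is a norm-one functional `f` with `u ∈ S(B_X, f, ε)` and
`dist(v, conv(𝕋 · S(B_X, f, ε))) < ε`. -/
def IsLush (𝕜 X : Type*) [RCLike 𝕜] [NormedAddCommGroup X] [NormedSpace 𝕜 X] : Prop :=
  ∀ u v : X, ‖u‖ = 1 → ‖v‖ = 1 → ∀ ε : ℝ, 0 < ε →
    ∃ f : X →L[𝕜] 𝕜, ‖f‖ = 1 ∧ u ∈ Slice 𝕜 f ε ∧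
      Metric.infDist v (ConvRotSlice 𝕜 f ε) < ε

private lemma auxBound (tk T A sd : ℝ) (htk : 0 ≤ tk) (hA0 : 0 < A) (hA2 : 1 - sd ≤ A)
    (hT0 : 0 < T) (hTinv : T⁻¹ ≤ 1 + 2 * sd) (hTinv1 : 1 ≤ T⁻¹) (hA1 : A ≤ 1) :
    |tk - tk / T * A⁻¹| * A ≤ tk * (3 * sd) := by
  have hAinv1 : 1 ≤ A⁻¹ := by nlinarith [mul_inv_cancel₀ hA0.ne', inv_pos.2 hA0]
  have h8 : 1 ≤ T⁻¹ * A⁻¹ := by nlinarith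
  have hx : tk - tk / T * A⁻¹ ≤ 0 := by
    have h9 := mul_le_mul_of_nonneg_left h8 htk
    rw [div_eq_mul_inv]
    nlinarith [h9]
  rw [abs_of_nonpos hx, neg_sub]
  have hval : (tk / T * A⁻¹ - tk) * A = tk * T⁻¹ - tk * A := by
    field_simp
  rw [hval]
  have e5 : tk * T⁻¹ ≤ tk * (1 + 2 * sd) := mul_le_mul_of_nonneg_left hTinv htk
  have e6 : tk * (1 - sd) ≤ tk * A := mul_le_mul_of_nonneg_left hA2 htk
  nlinarith [e5, e6]

private lemma auxSlice (A N d r e : ℝ) (hA0 : 0 < A) (hA2 : 1/2 ≤ A) (hr : A - d < r)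
    (hNinv : 1 ≤ N⁻¹) (hd : 0 ≤ d) (hd14 : d ≤ 1/4) (hde : 2 * d ≤ e) :
    1 - e < N⁻¹ * (A⁻¹ * r) := by
  have h4 : A⁻¹ ≤ 2 := by nlinarith [mul_inv_cancel₀ hA0.ne', inv_pos.2 hA0]
  have h3 : A⁻¹ * (A - d) = 1 - A⁻¹ * d := by field_simp
  have h2 : A⁻¹ * (A - d) < A⁻¹ * r := mul_lt_mul_of_pos_left hr (inv_pos.2 hA0)
  rw [h3] at h2
  have h5 : A⁻¹ * d ≤ 2 * d := by nlinarith
  have h6 : 0 ≤ A⁻¹ * r := by linarith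
  have h7 : A⁻¹ * r ≤ N⁻¹ * (A⁻¹ * r) := le_mul_of_one_le_left h6 hNinv
  linarith

set_option maxHeartbeats 1000000 in
theorem isLush_of_lSummand {𝕜 Z : Type*} [RCLike 𝕜] [NormedAddCommGroup Z] [NormedSpace 𝕜 Z]
    [CompleteSpace Z] [Nontrivial Z] (hZ : IsLush 𝕜 Z)
    (P : Z →L[𝕜] Z) (hproj : ∀ z, P (P z) = P z)
    (hL : ∀ z, ‖z‖ = ‖P z‖ + ‖z - P z‖)
    (X : Submodule 𝕜 Z) (hX : ∀ z, z ∈ X ↔ ∃ w, P w = z) :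
    IsLush 𝕜 X := by
  intro u v hu hv ε hε
  -- the small parameter
  set δ : ℝ := min ((ε/6)^2) (min (ε/2) (1/4)) with hδdef
  have hδpos : 0 < δ := lt_min (by positivity) (lt_min (by positivity) (by norm_num))
  have hδ14 : δ ≤ 1/4 := le_trans (min_le_right _ _) (min_le_right _ _)
  have hδε2 : δ ≤ ε/2 := le_trans (min_le_right _ _) (min_le_left _ _)
  have hδε : δ ≤ ε := by linarith
  have hsq : Real.sqrt δ * Real.sqrt δ = δ := Real.mul_self_sqrt hδpos.le
  have hsqpos : 0 < Real.sqrt δ := Real.sqrt_pos.2 hδpos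
  have hsq6 : Real.sqrt δ ≤ ε/6 := by
    have h1 : δ ≤ (ε/6)^2 := min_le_left _ _
    have := Real.sqrt_le_sqrt h1
    rwa [Real.sqrt_sq (by positivity)] at this
  have hsqhalf : Real.sqrt δ ≤ 1/2 := by
    have h1 : Real.sqrt δ ≤ Real.sqrt (1/4) := Real.sqrt_le_sqrt hδ14
    have h2 : Real.sqrt (1/4) = 1/2 := by
      rw [show (1/4 : ℝ) = (1/2)^2 by norm_num, Real.sqrt_sq (by norm_num)]
    linarith
  have hδsq : δ ≤ Real.sqrt δ := by nlinarith
  clear_value δ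
  clear hδdef
  -- basic facts about P
  have hPle : ∀ z, ‖P z‖ ≤ ‖z‖ := fun z => by
    have := hL z; have := norm_nonneg (z - P z); linarith
  have hu' : ‖(u : Z)‖ = 1 := by rw [← Submodule.coe_norm]; exact hu
  have hv' : ‖(v : Z)‖ = 1 := by rw [← Submodule.coe_norm]; exact hv
  have hPv : P (v : Z) = (v : Z) := by
    obtain ⟨wv, hwv⟩ := (hX (v : Z)).1 v.2
    rw [← hwv, hproj]
  -- apply lushness of Z
  obtain ⟨f, hf1, hfu, hfd⟩ := hZ (u : Z) (v : Z) hu' hv' δ hδpos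
  obtain ⟨hfu1, hfu2⟩ := hfu
  -- extract a convex combination close to v
  have hne : (ConvRotSlice 𝕜 f δ).Nonempty := by
    refine ⟨(u : Z), 1, (fun _ => 1), (fun _ => 1), (fun _ => (u : Z)), ?_, ?_, ?_, ?_, ?_⟩
    · intro k; norm_num
    · simp
    · intro k; simp
    · intro k; exact ⟨hfu1, hfu2⟩
    · simp
  obtain ⟨y, hy, hyd⟩ := (Metric.infDist_lt_iff hne).1 hfd
  rw [dist_eq_norm] at hyd
  obtain ⟨n, t, ω, s, ht, hts, hω, hs, hyeq⟩ := hy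
  -- notation
  set a : Fin n → ℝ := fun k => ‖P (s k)‖ with ha
  have hak1 : ∀ k, a k ≤ 1 := fun k => le_trans (hPle _) (hs k).1
  have hakpos' : ∀ k, 0 ≤ a k := fun k => norm_nonneg _
  have hfPs : ∀ k, a k - δ < RCLike.re (f (P (s k))) := by
    intro k
    have h1 := (hs k).2
    have h2 : ‖f (s k - P (s k))‖ ≤ ‖s k - P (s k)‖ := by
      calc ‖f (s k - P (s k))‖ ≤ ‖f‖ * ‖s k - P (s k)‖ := f.le_opNorm _
        _ = ‖s k - P (s k)‖ := by rw [hf1, one_mul]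
    have h3 : RCLike.re (f (s k - P (s k))) ≤ ‖s k - P (s k)‖ :=
      le_trans (RCLike.re_le_norm _) h2
    have h4 : ‖s k - P (s k)‖ = ‖s k‖ - a k := by have := hL (s k); linarith
    have h5 : ‖s k‖ ≤ 1 := (hs k).1
    have h6 : f (P (s k)) = f (s k) - f (s k - P (s k)) := by
      rw [map_sub]; ring
    rw [h6, map_sub]
    rw [h4] at h3
    simp only [map_sub] at h3 ⊢
    linarith
  -- the projected sum
  have hPy : P y = ∑ k, ((t k : 𝕜) * ω k) • P (s k) := by
    rw [hyeq, map_sum]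
    simp [map_smul]
  have hnormcoef : ∀ (c : ℝ) (o : 𝕜), 0 ≤ c → ‖o‖ = 1 → ‖(c : 𝕜) * o‖ = c := by
    intro c o hc ho
    rw [norm_mul, ho, mul_one, RCLike.norm_ofReal, abs_of_nonneg hc]
  have hPyS : ‖P y‖ ≤ ∑ k, t k * a k := by
    rw [hPy]
    refine le_trans (norm_sum_le _ _) (le_of_eq ?_)
    refine Finset.sum_congr rfl fun k _ => ?_
    rw [norm_smul, hnormcoef (t k) (ω k) (ht k) (hω k)]
  have hvPy : ‖(v : Z) - P y‖ < δ := by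
    calc ‖(v : Z) - P y‖ = ‖P ((v:Z) - y)‖ := by rw [map_sub, hPv]
      _ ≤ ‖(v:Z) - y‖ := hPle _
      _ < δ := hyd
  have hS : 1 - δ < ∑ k, t k * a k := by
    have h1 : (1:ℝ) ≤ ‖(v:Z) - P y‖ + ‖P y‖ := by
      calc (1:ℝ) = ‖(v:Z)‖ := hv'.symm
        _ ≤ ‖(v:Z) - P y‖ + ‖P y‖ := by
          have := norm_add_le ((v:Z) - P y) (P y); simpa using this
    linarith
  -- good and bad indices
  set G : Finset (Fin n) := Finset.univ.filter (fun k => 1 - Real.sqrt δ ≤ a k) with hG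
  have hbad : ∑ k ∈ Finset.univ.filter (fun k => ¬ (1 - Real.sqrt δ ≤ a k)), t k
      ≤ Real.sqrt δ := by
    have h1 : ∀ k ∈ Finset.univ.filter (fun k => ¬ (1 - Real.sqrt δ ≤ a k)),
        Real.sqrt δ * t k ≤ t k * (1 - a k) := by
      intro k hk
      rw [Finset.mem_filter] at hk
      have h2 : a k < 1 - Real.sqrt δ := by linarith [not_le.1 hk.2]
      nlinarith [ht k]
    have h3 : ∑ k ∈ Finset.univ.filter (fun k => ¬ (1 - Real.sqrt δ ≤ a k)), t k * (1 - a k)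
        ≤ ∑ k, t k * (1 - a k) := by
      refine Finset.sum_le_sum_of_subset_of_nonneg (Finset.filter_subset _ _) ?_
      intro k _ _
      have := hak1 k; have := ht k; nlinarith
    have h4 : ∑ k, t k * (1 - a k) < δ := by
      have h41 : ∑ k, t k * (1 - a k) = (∑ k, t k) - ∑ k, t k * a k := by
        rw [← Finset.sum_sub_distrib]
        refine Finset.sum_congr rfl fun k _ => by ring
      rw [h41, hts]
      linarith
    have h5 : Real.sqrt δ * ∑ k ∈ Finset.univ.filter (fun k => ¬ (1 - Real.sqrt δ ≤ a k)), t k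
        < δ := by
      rw [Finset.mul_sum]
      calc _ ≤ ∑ k ∈ Finset.univ.filter (fun k => ¬ (1 - Real.sqrt δ ≤ a k)), t k * (1 - a k) :=
            Finset.sum_le_sum h1
        _ ≤ _ := h3
        _ < δ := h4
    have h6 : Real.sqrt δ * ∑ k ∈ Finset.univ.filter (fun k => ¬ (1 - Real.sqrt δ ≤ a k)), t k
        < Real.sqrt δ * Real.sqrt δ := by rw [hsq]; exact h5
    exact (lt_of_mul_lt_mul_left h6 hsqpos.le).le
  set T : ℝ := ∑ k ∈ G, t k with hT
  have hsplit : T + ∑ k ∈ Finset.univ.filter (fun k => ¬ (1 - Real.sqrt δ ≤ a k)), t k = 1 := by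
    rw [hT, hG, Finset.sum_filter_add_sum_filter_not]
    exact hts
  have hT1 : 1 - Real.sqrt δ ≤ T := by linarith
  have hTpos : 0 < T := by linarith
  have hTle1 : T ≤ 1 := by
    have := Finset.sum_nonneg
      (fun k (_ : k ∈ Finset.univ.filter (fun k => ¬ (1 - Real.sqrt δ ≤ a k))) => ht k)
    linarith
  have hTinv : T⁻¹ ≤ 1 + 2 * Real.sqrt δ := by
    have key : 1 ≤ T * (1 + 2*Real.sqrt δ) := by nlinarith
    have h2 : T⁻¹ * 1 ≤ T⁻¹ * (T * (1 + 2*Real.sqrt δ)) :=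
      mul_le_mul_of_nonneg_left key (inv_nonneg.2 hTpos.le)
    rwa [mul_one, ← mul_assoc, inv_mul_cancel₀ hTpos.ne', one_mul] at h2
  have hTinv1 : 1 ≤ T⁻¹ := by
    have h2 : T⁻¹ * T ≤ T⁻¹ * 1 := mul_le_mul_of_nonneg_left hTle1 (inv_nonneg.2 hTpos.le)
    rwa [inv_mul_cancel₀ hTpos.ne', mul_one] at h2
  -- the functional g on X
  set F : X →L[𝕜] 𝕜 := f.comp X.subtypeL with hF
  have hFx : ∀ x : X, F x = f (x : Z) := fun x => rfl
  set N : ℝ := ‖F‖ with hN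
  have hNle1 : N ≤ 1 := by
    refine ContinuousLinearMap.opNorm_le_bound _ zero_le_one ?_
    intro x
    rw [hFx, one_mul, Submodule.coe_norm]
    calc ‖f (x:Z)‖ ≤ ‖f‖ * ‖(x:Z)‖ := f.le_opNorm _
      _ = ‖(x:Z)‖ := by rw [hf1, one_mul]
  have hNge : 1 - δ < N := by
    have h1 : RCLike.re (f (u:Z)) ≤ ‖F u‖ := by
      rw [← hFx]; exact RCLike.re_le_norm _
    have h2 : ‖F u‖ ≤ N * ‖u‖ := F.le_opNorm u
    rw [hu, mul_one] at h2
    linarith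
  have hNpos : 0 < N := by linarith
  have hNinv1 : 1 ≤ N⁻¹ := by
    have h2 : N⁻¹ * N ≤ N⁻¹ * 1 := mul_le_mul_of_nonneg_left hNle1 (inv_nonneg.2 hNpos.le)
    rwa [inv_mul_cancel₀ hNpos.ne', mul_one] at h2
  set g : X →L[𝕜] 𝕜 := ((N⁻¹ : ℝ) : 𝕜) • F with hg
  have hgx : ∀ x : X, RCLike.re (g x) = N⁻¹ * RCLike.re (f (x:Z)) := by
    intro x
    rw [hg, ContinuousLinearMap.smul_apply, smul_eq_mul, RCLike.re_ofReal_mul, hFx]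
  have hg1 : ‖g‖ = 1 := by
    have hgle : ‖g‖ ≤ 1 := by
      calc ‖g‖ ≤ ‖((N⁻¹ : ℝ) : 𝕜)‖ * ‖F‖ := ContinuousLinearMap.opNorm_smul_le _ _
        _ = N⁻¹ * N := by
            rw [RCLike.norm_ofReal, abs_of_nonneg (inv_nonneg.2 hNpos.le)]
        _ = 1 := inv_mul_cancel₀ hNpos.ne'
    have hFg : ((N : ℝ) : 𝕜) • g = F := by
      rw [hg, smul_smul, ← RCLike.ofReal_mul, mul_inv_cancel₀ hNpos.ne', RCLike.ofReal_one,
        one_smul]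
    have hgge : 1 ≤ ‖g‖ := by
      have h1 : N ≤ N * ‖g‖ := by
        calc N = ‖F‖ := hN
          _ = ‖((N : ℝ) : 𝕜) • g‖ := by rw [hFg]
          _ ≤ ‖((N : ℝ) : 𝕜)‖ * ‖g‖ := ContinuousLinearMap.opNorm_smul_le _ _
          _ = N * ‖g‖ := by rw [RCLike.norm_ofReal, abs_of_nonneg hNpos.le]
      nlinarith
    linarith
  have hug : u ∈ Slice 𝕜 g ε := by
    constructor
    · rw [hu]
    · rw [hgx]
      have h0 : 0 ≤ RCLike.re (f (u:Z)) := by linarith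
      have h5 : RCLike.re (f (u:Z)) ≤ N⁻¹ * RCLike.re (f (u:Z)) :=
        le_mul_of_one_le_left h0 hNinv1
      linarith
  -- the convex combination in X
  have hPsX : ∀ k, P (s k) ∈ X := fun k => (hX _).2 ⟨s k, rfl⟩
  set t' : Fin n → ℝ := fun k => if k ∈ G then t k / T else 0 with ht'
  set s' : Fin n → X :=
    fun k => if k ∈ G then ((((a k)⁻¹ : ℝ) : 𝕜) • (⟨P (s k), hPsX k⟩ : X)) else u with hs'def
  have hGa : ∀ k ∈ G, 1 - Real.sqrt δ ≤ a k := by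
    intro k hk; rw [hG, Finset.mem_filter] at hk; exact hk.2
  have hGapos : ∀ k ∈ G, 0 < a k := by
    intro k hk; have := hGa k hk; linarith
  have hs'mem : ∀ k, s' k ∈ Slice 𝕜 g ε := by
    intro k
    by_cases hk : k ∈ G
    · have hap := hGapos k hk
      simp only [hs'def, if_pos hk]
      constructor
      · rw [norm_smul, RCLike.norm_ofReal, abs_of_nonneg (inv_nonneg.2 hap.le)]
        have hnn : ‖(⟨P (s k), hPsX k⟩ : X)‖ = a k := by rw [Submodule.coe_norm]
        rw [hnn, inv_mul_cancel₀ hap.ne']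
      · rw [hgx]
        have hcoe : (((((a k)⁻¹ : ℝ) : 𝕜) • (⟨P (s k), hPsX k⟩ : X) : X) : Z)
            = (((a k)⁻¹ : ℝ) : 𝕜) • P (s k) := rfl
        rw [hcoe, map_smul, smul_eq_mul, RCLike.re_ofReal_mul]
        exact auxSlice (a k) N δ (RCLike.re (f (P (s k)))) ε hap
          (by linarith [hGa k hk, hsqhalf]) (hfPs k) hNinv1 hδpos.le hδ14 (by linarith)
    · simp only [hs'def, if_neg hk]
      exact hug
  set w : X := ∑ k, ((t' k : 𝕜) * ω k) • s' k with hw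
  have ht'sum : ∑ k, t' k = 1 := by
    have h1 : ∑ k, t' k = ∑ k ∈ G, t k / T := by
      rw [ht']
      rw [Finset.sum_ite_mem]
      congr 1
      simp
    rw [h1, ← Finset.sum_div, ← hT, div_self hTpos.ne']
  have hwmem : w ∈ ConvRotSlice 𝕜 g ε := by
    refine ⟨n, t', ω, s', ?_, ht'sum, hω, hs'mem, rfl⟩
    intro k
    simp only [ht']
    by_cases hk : k ∈ G
    · rw [if_pos hk]; exact div_nonneg (ht k) hTpos.le
    · rw [if_neg hk]
  -- distance estimate
  have hwcoe : ((w : X) : Z) = ∑ k, ((t' k : 𝕜) * ω k) • ((s' k : X) : Z) := by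
    rw [hw]
    push_cast
    rfl
  have hqr : ∀ k, ‖((t k : 𝕜) * ω k) • P (s k) - ((t' k : 𝕜) * ω k) • ((s' k : X) : Z)‖
      ≤ if k ∈ G then t k * (3 * Real.sqrt δ) else t k := by
    intro k
    by_cases hk : k ∈ G
    · have hap := hGapos k hk
      rw [if_pos hk]
      have hsc : ((s' k : X) : Z) = (((a k)⁻¹ : ℝ) : 𝕜) • P (s k) := by
        simp only [hs'def, if_pos hk]
        rfl
      have ht'k : t' k = t k / T := by simp only [ht']; rw [if_pos hk]
      have hdiff : ((t k : 𝕜) * ω k) • P (s k) - ((t' k : 𝕜) * ω k) • ((s' k : X) : Z)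
          = (((t k - t k / T * (a k)⁻¹ : ℝ) : 𝕜) * ω k) • P (s k) := by
        rw [hsc, ht'k, smul_smul, ← sub_smul]
        congr 1
        push_cast
        ring
      rw [hdiff, norm_smul, norm_mul, RCLike.norm_ofReal, hω k, mul_one]
      have hPsk : ‖P (s k)‖ = a k := rfl
      rw [hPsk]
      exact auxBound (t k) T (a k) (Real.sqrt δ) (ht k) hap (hGa k hk) hTpos hTinv hTinv1
        (hak1 k)
    · have ht'k : t' k = 0 := by simp only [ht']; rw [if_neg hk]
      rw [if_neg hk, ht'k]
      simp only [RCLike.ofReal_zero, zero_mul, zero_smul, sub_zero]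
      rw [norm_smul, hnormcoef (t k) (ω k) (ht k) (hω k)]
      calc t k * ‖P (s k)‖ ≤ t k * 1 :=
            mul_le_mul_of_nonneg_left (hak1 k) (ht k)
        _ = t k := mul_one _
  have hsum1 : ‖P y - (w : Z)‖ ≤ ∑ k, (if k ∈ G then t k * (3 * Real.sqrt δ) else t k) := by
    rw [hPy, hwcoe, ← Finset.sum_sub_distrib]
    exact le_trans (norm_sum_le _ _) (Finset.sum_le_sum fun k _ => hqr k)
  have hsum2 : ∑ k, (if k ∈ G then t k * (3 * Real.sqrt δ) else t k) ≤ 4 * Real.sqrt δ := by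
    rw [Finset.sum_ite]
    have hA : ∑ k ∈ Finset.univ.filter (fun k => k ∈ G), t k * (3 * Real.sqrt δ)
        ≤ 3 * Real.sqrt δ := by
      have h1 : Finset.univ.filter (fun k => k ∈ G) = G := by
        ext k; simp
      rw [h1, ← Finset.sum_mul, ← hT]
      calc T * (3 * Real.sqrt δ) ≤ 1 * (3 * Real.sqrt δ) :=
            mul_le_mul_of_nonneg_right hTle1 (by positivity)
        _ = 3 * Real.sqrt δ := one_mul _
    have hB : ∑ k ∈ Finset.univ.filter (fun k => ¬ k ∈ G), t k ≤ Real.sqrt δ := by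
      have h1 : Finset.univ.filter (fun k => ¬ k ∈ G) =
          Finset.univ.filter (fun k => ¬ (1 - Real.sqrt δ ≤ a k)) := by
        ext k; simp [hG]
      rw [h1]
      exact hbad
    linarith
  refine ⟨g, hg1, hug, ?_⟩
  have hle : Metric.infDist v (ConvRotSlice 𝕜 g ε) ≤ dist v w :=
    Metric.infDist_le_dist_of_mem hwmem
  have hdist : dist v w < ε := by
    rw [dist_eq_norm, Submodule.coe_norm]
    have hcd : ((v - w : X) : Z) = (v : Z) - (w : Z) := rfl
    rw [hcd]
    have htr : ‖(v : Z) - (w : Z)‖ ≤ ‖(v : Z) - P y‖ + ‖P y - (w : Z)‖ := by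
      have h1 : (v : Z) - (w : Z) = ((v : Z) - P y) + (P y - (w : Z)) := by abel
      rw [h1]; exact norm_add_le _ _
    have : ‖(v : Z) - (w : Z)‖ < δ + 4 * Real.sqrt δ := by
      have := le_trans hsum1 hsum2
      linarith
    linarith [hsq6, hδsq, hε]
  linarith
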